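/- Under Setting 2.1, if {1, F, G} are linearly independent on I (g nonvanishing on I), then v = f/g is differentiable on I. -/

import Mathlib

/-- Differentiability of v = f/g on I under linear independence of {1, F, G}. -/
theorem stmt_5 (J I : Set ℝ) (hJo : IsOpen J) (hJc : J.OrdConnected) (hJne : J.Nonempty)
    (α β : ℝ) (hα : α ∈ Set.Ioo (0:ℝ) 1) (hβ : β ∈ Set.Ioo (0:ℝ) 1) (hαβ : α + β = 1)
    (F G f g : ℝ → ℝ)
    (hF : ∀ x ∈ J, HasDerivAt F (f x) x) (hG : ∀ x ∈ J, HasDerivAt G (g x) x)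
    (heq : ∀ a ∈ J, ∀ b ∈ J,
      (F b - F a) * g (α * a + β * b) = (G b - G a) * f (α * a + β * b))
    (hIJ : I ⊆ J) (hIo : IsOpen I) (hIne : I.Nonempty) (hIc : I.OrdConnected)
    (hg : ∀ x ∈ I, g x ≠ 0)
    (hindep : ¬ ∃ c₁ c₂ c₃ : ℝ, (c₁, c₂, c₃) ≠ (0, 0, 0) ∧
        ∀ x ∈ I, c₁ * F x + c₂ * G x + c₃ = 0) :
    DifferentiableOn ℝ (fun x => f x / g x) I := by
  have hα0 : (0:ℝ) < α := hα.1
  have hβ0 : (0:ℝ) < β := hβ.1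
  intro x₀ hx₀I
  have hx₀J : x₀ ∈ J := hIJ hx₀I
  -- Step 1: find a nondegenerate pair
  have hpair : ∃ a ∈ J, ∃ b ∈ J, α * a + β * b = x₀ ∧ G a ≠ G b := by
    by_contra hdeg
    push_neg at hdeg
    -- degeneracy implies g x₀ = 0
    obtain ⟨ε, hε0, hball⟩ := Metric.isOpen_iff.1 hJo x₀ hx₀J
    have hmem : ∀ t : ℝ, |t| < ε → (x₀ - β * t ∈ J ∧ x₀ + α * t ∈ J) := by
      intro t ht
      constructor
      · apply hball
        simp only [Metric.mem_ball, Real.dist_eq]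
        have h : |x₀ - β * t - x₀| = β * |t| := by
          rw [show x₀ - β * t - x₀ = -(β * t) by ring, abs_neg, abs_mul, abs_of_pos hβ0]
        rw [h]
        nlinarith [abs_nonneg t]
      · apply hball
        simp only [Metric.mem_ball, Real.dist_eq]
        have h : |x₀ + α * t - x₀| = α * |t| := by
          rw [show x₀ + α * t - x₀ = α * t by ring, abs_mul, abs_of_pos hα0]
        rw [h]
        nlinarith [abs_nonneg t]
    have hGG : ∀ t : ℝ, |t| < ε → G (x₀ + α * t) = G (x₀ - β * t) := by
      intro t ht
      obtain ⟨h1, h2⟩ := hmem t ht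
      exact (hdeg _ h1 _ h2 (by linear_combination x₀ * hαβ)).symm
    have h1 : HasDerivAt (fun t : ℝ => G (x₀ + α * t)) (g x₀ * α) 0 := by
      have hinner : HasDerivAt (fun t : ℝ => x₀ + α * t) α 0 := by
        simpa using ((hasDerivAt_id (0:ℝ)).const_mul α).const_add x₀
      have h := (hG (x₀ + α * 0) (by simpa using hx₀J)).comp 0 hinner
      simpa [Function.comp_def] using h
    have h2 : HasDerivAt (fun t : ℝ => G (x₀ - β * t)) (g x₀ * (-β)) 0 := by
      have hinner : HasDerivAt (fun t : ℝ => x₀ - β * t) (-β) 0 := by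
        simpa [sub_eq_add_neg] using
          (((hasDerivAt_id (0:ℝ)).const_mul β).neg).const_add x₀
      have h := (hG (x₀ - β * 0) (by simpa using hx₀J)).comp 0 hinner
      simpa [Function.comp_def] using h
    have heq' : (fun t : ℝ => G (x₀ - β * t)) =ᶠ[nhds 0] (fun t : ℝ => G (x₀ + α * t)) := by
      filter_upwards [Metric.ball_mem_nhds (0:ℝ) hε0] with t ht
      exact (hGG t (by simpa [Real.dist_eq] using ht)).symm
    have h1' : HasDerivAt (fun t : ℝ => G (x₀ - β * t)) (g x₀ * α) 0 :=
      h1.congr_of_eventuallyEq heq'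
    have : g x₀ * α = g x₀ * (-β) := h1'.unique h2
    have hg0 : g x₀ = 0 := by
      have : g x₀ * (α + β) = 0 := by linarith [this]
      rw [hαβ, mul_one] at this
      exact this
    exact hg x₀ hx₀I hg0
  obtain ⟨a₀, ha₀J, b₀, hb₀J, hab, hGab⟩ := hpair
  -- affine reparametrization
  set A : ℝ → ℝ := fun x => (x - β * b₀) / α with hA_def
  have hAx₀ : A x₀ = a₀ := by
    show (x₀ - β * b₀) / α = a₀
    rw [div_eq_iff hα0.ne']
    linear_combination -hab
  have hAcont : ContinuousAt A x₀ := by fun_prop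
  have hAderiv : HasDerivAt A (1 / α) x₀ := by
    simpa [one_div] using ((hasDerivAt_id x₀).sub_const (β * b₀)).div_const α
  have hGcont : ContinuousAt (fun x => G (A x)) x₀ := by
    have := (hG a₀ ha₀J).continuousAt
    exact (hAx₀ ▸ this : ContinuousAt G (A x₀)).comp hAcont
  -- the local formula
  have hkey : ∀ x ∈ I, A x ∈ J → G b₀ - G (A x) ≠ 0 →
      f x / g x = (F b₀ - F (A x)) / (G b₀ - G (A x)) := by
    intro x hxI hAxJ hden
    have h := heq (A x) hAxJ b₀ hb₀J
    have hx : α * A x + β * b₀ = x := by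
      show α * ((x - β * b₀) / α) + β * b₀ = x
      rw [mul_div_assoc', mul_div_cancel_left₀ _ hα0.ne']; ring
    rw [hx] at h
    rw [div_eq_div_iff (hg x hxI) hden]
    linarith [h]
  set w : ℝ → ℝ := fun x => (F b₀ - F (A x)) / (G b₀ - G (A x)) with hw_def
  have hdenx₀ : G b₀ - G (A x₀) ≠ 0 := by
    rw [hAx₀]; exact sub_ne_zero_of_ne (Ne.symm hGab)
  have hwdiff : DifferentiableAt ℝ w x₀ := by
    have hFA : DifferentiableAt ℝ (fun x => F (A x)) x₀ := by
      have hF' : HasDerivAt F (f a₀) (A x₀) := hAx₀ ▸ hF a₀ ha₀J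
      exact (hF'.comp x₀ hAderiv).differentiableAt
    have hGA : DifferentiableAt ℝ (fun x => G (A x)) x₀ := by
      have hG' : HasDerivAt G (g a₀) (A x₀) := hAx₀ ▸ hG a₀ ha₀J
      exact (hG'.comp x₀ hAderiv).differentiableAt
    exact ((differentiableAt_const _).sub hFA).div ((differentiableAt_const _).sub hGA) hdenx₀
  -- eventual equality
  have hev : ∀ᶠ x in nhds x₀, A x ∈ J ∧ G b₀ - G (A x) ≠ 0 := by
    have h1 : ∀ᶠ x in nhds x₀, A x ∈ J := by
      have : J ∈ nhds (A x₀) := hJo.mem_nhds (hAx₀ ▸ ha₀J)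
      exact hAcont this
    have h2 : ∀ᶠ x in nhds x₀, G b₀ - G (A x) ≠ 0 := by
      have hc : ContinuousAt (fun x => G b₀ - G (A x)) x₀ := (continuousAt_const).sub hGcont
      exact hc.eventually_ne hdenx₀
    exact h1.and h2
  have hveq : (fun x => f x / g x) =ᶠ[nhdsWithin x₀ I] w := by
    filter_upwards [nhdsWithin_le_nhds hev, self_mem_nhdsWithin] with x hx hxI
    exact hkey x hxI hx.1 hx.2
  have hvx₀ : f x₀ / g x₀ = w x₀ :=
    hkey x₀ hx₀I (hAx₀ ▸ ha₀J) hdenx₀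
  exact hwdiff.differentiableWithinAt.congr_of_eventuallyEq hveq hvx₀
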